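/- arXiv:1810.02943 — 2 statements merged into one kernel-verified Lean document; each statement's English description precedes it below -/
import Mathlib

section
/- For integers n ≥ 1 and 0 ≤ t ≤ n, the maximum over s ∈ {0, 1, ..., t} of the quantity s(2n − s + 1)/2 + (t − s)(2n − t + s + 1)/2 equals nt − (t² − t)/2 + ⌊t²/4⌋. -/
/-- For integers `n ≥ 1` and `0 ≤ t ≤ n`, the maximum over `s ∈ {0,…,t}` of
`s(2n−s+1)/2 + (t−s)(2n−t+s+1)/2` equals `nt − (t²−t)/2 + ⌊t²/4⌋`. -/
theorem stmt_1 (n t : ℤ) (hn : 1 ≤ n) (ht0 : 0 ≤ t) (htn : t ≤ n) :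
    (Finset.Icc (0 : ℤ) t).sup' (Finset.nonempty_Icc.mpr ht0)
      (fun s : ℤ => ((s : ℚ) * (2 * (n : ℚ) - s + 1)) / 2
        + (((t : ℚ) - s) * (2 * (n : ℚ) - t + s + 1)) / 2)
    = (n : ℚ) * t - ((t : ℚ) ^ 2 - t) / 2 + ((t ^ 2 / 4 : ℤ) : ℚ) := by
  apply le_antisymm
  · apply Finset.sup'_le
    intro s hs
    have h1 : s * (t - s) ≤ t ^ 2 / 4 := by
      rw [Int.le_ediv_iff_mul_le (by norm_num)]
      nlinarith [sq_nonneg (t - 2 * s)]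
    have h2 : ((s * (t - s) : ℤ) : ℚ) ≤ ((t ^ 2 / 4 : ℤ) : ℚ) := by exact_mod_cast h1
    push_cast at h2
    have heq : ((s : ℚ) * (2 * (n : ℚ) - s + 1)) / 2
        + (((t : ℚ) - s) * (2 * (n : ℚ) - t + s + 1)) / 2
        = (n : ℚ) * t - ((t : ℚ) ^ 2 - t) / 2 + (s : ℚ) * ((t : ℚ) - s) := by ring
    rw [heq]
    linarith
  · have hmem : t / 2 ∈ Finset.Icc (0 : ℤ) t := by
      simp only [Finset.mem_Icc]
      omega
    refine le_trans ?_ (Finset.le_sup' _ hmem)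
    have hval : (t / 2) * (t - t / 2) = t ^ 2 / 4 := by
      rcases Int.even_or_odd t with ⟨k, hk⟩ | ⟨k, hk⟩
      · subst hk
        have h1 : (k + k) / 2 = k := by omega
        have h2 : (k + k) ^ 2 / 4 = k * k := by ring_nf; omega
        rw [h1, h2]; ring
      · subst hk
        have h1 : (2 * k + 1) / 2 = k := by omega
        have h2 : (2 * k + 1) ^ 2 / 4 = k * (k + 1) := by ring_nf; omega
        rw [h1, h2]; ring
    have hcast : (((t / 2) * (t - t / 2) : ℤ) : ℚ) = ((t ^ 2 / 4 : ℤ) : ℚ) := by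
      rw [hval]
    push_cast at hcast
    have heq : (((t / 2 : ℤ) : ℚ) * (2 * (n : ℚ) - ((t / 2 : ℤ) : ℚ) + 1)) / 2
        + (((t : ℚ) - ((t / 2 : ℤ) : ℚ)) * (2 * (n : ℚ) - t + ((t / 2 : ℤ) : ℚ) + 1)) / 2
        = (n : ℚ) * t - ((t : ℚ) ^ 2 - t) / 2
          + ((t / 2 : ℤ) : ℚ) * ((t : ℚ) - ((t / 2 : ℤ) : ℚ)) := by ring
    simp only [heq]
    linarith
end

section
/- Let n ≥ 1 and 0 ≤ t ≤ n be integers, and let u, v be permutations of {0, 1, ..., n}. Then the sum over l from 0 to t−1 of max{u(l), v(l)} is at most nt − (t² − t)/2 + ⌊t²/4⌋. -/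
/-- Key natural-number bound: the sum of maxima over the first `t` indices is at most
`k*(k+1) + (n-k)*t` where `k = t/2`. -/
private lemma aux_sum_max (n t : ℕ) (htn : t ≤ n) (u v : Equiv.Perm (Fin (n + 1))) :
    (∑ l ∈ Finset.univ.filter (fun l : Fin (n + 1) => (l : ℕ) < t),
        max ((u l : ℕ)) ((v l : ℕ)))
      ≤ t / 2 * (t / 2 + 1) + (n - t / 2) * t := by
  set k := t / 2 with hk
  set S := Finset.univ.filter (fun l : Fin (n + 1) => (l : ℕ) < t) with hS
  have hScard : S.card = t := by
    rw [hS, Finset.card_filter,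
      Fin.sum_univ_eq_sum_range (fun i => if i < t then 1 else 0), ← Finset.card_filter]
    have h : (Finset.range (n+1)).filter (· < t) = Finset.range t := by
      ext x
      simp only [Finset.mem_filter, Finset.mem_range]
      omega
    rw [h, Finset.card_range]
  have hfle : ∀ l : Fin (n+1), max (u l : ℕ) (v l : ℕ) ≤ n := fun l =>
    max_le (Nat.lt_succ_iff.mp (u l).isLt) (Nat.lt_succ_iff.mp (v l).isLt)
  -- layer cake decomposition
  have layer : ∑ l ∈ S, max (u l : ℕ) (v l : ℕ)
      = ∑ m ∈ Finset.range (n+1), (S.filter (fun l => m < max (u l : ℕ) (v l : ℕ))).card := by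
    have h1 : ∀ l ∈ S, max (u l : ℕ) (v l : ℕ)
        = ∑ m ∈ Finset.range (n+1), if m < max (u l : ℕ) (v l : ℕ) then 1 else 0 := by
      intro l _
      rw [← Finset.card_filter]
      have h : (Finset.range (n+1)).filter (fun m => m < max (u l : ℕ) (v l : ℕ))
          = Finset.range (max (u l : ℕ) (v l : ℕ)) := by
        ext x
        simp only [Finset.mem_filter, Finset.mem_range]
        have := hfle l
        omega
      rw [h, Finset.card_range]
    rw [Finset.sum_congr rfl h1, Finset.sum_comm]
    exact Finset.sum_congr rfl fun m _ => (Finset.card_filter _ _).symm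
  rw [layer]
  -- bound each layer
  have hsingle : ∀ (w : Equiv.Perm (Fin (n+1))) (m : ℕ),
      (S.filter (fun l => m < (w l : ℕ))).card ≤ n - m := by
    intro w m
    have h : (S.filter (fun l => m < (w l : ℕ))).card ≤ (Finset.Ioc m n).card := by
      apply Finset.card_le_card_of_injOn (fun l => (w l : ℕ))
      · intro l hl
        simp only [Finset.mem_coe, Finset.mem_filter] at hl
        simp only [Finset.mem_coe, Finset.mem_Ioc]
        exact ⟨hl.2, Nat.lt_succ_iff.mp (w l).isLt⟩
      · intro a _ b _ hab
        exact w.injective (Fin.val_injective hab)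
    simpa [Nat.card_Ioc] using h
  have hlayer : ∀ m, (S.filter (fun l => m < max (u l : ℕ) (v l : ℕ))).card
      ≤ min t (2 * (n - m)) := by
    intro m
    refine le_min ?_ ?_
    · calc (S.filter (fun l => m < max (u l : ℕ) (v l : ℕ))).card
          ≤ S.card := Finset.card_filter_le _ _
        _ = t := hScard
    · have hsplit : S.filter (fun l => m < max (u l : ℕ) (v l : ℕ))
          ⊆ S.filter (fun l => m < (u l : ℕ)) ∪ S.filter (fun l => m < (v l : ℕ)) := by
        intro l hl
        simp only [Finset.mem_filter, Finset.mem_union, lt_max_iff] at *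
        tauto
      calc (S.filter (fun l => m < max (u l : ℕ) (v l : ℕ))).card
          ≤ (S.filter (fun l => m < (u l : ℕ)) ∪ S.filter (fun l => m < (v l : ℕ))).card :=
            Finset.card_le_card hsplit
        _ ≤ (S.filter (fun l => m < (u l : ℕ))).card
            + (S.filter (fun l => m < (v l : ℕ))).card := Finset.card_union_le _ _
        _ ≤ (n - m) + (n - m) := Nat.add_le_add (hsingle u m) (hsingle v m)
        _ = 2 * (n - m) := by ring
  have hkt : k + 1 ≤ n + 1 := by omega
  calc ∑ m ∈ Finset.range (n+1), (S.filter (fun l => m < max (u l : ℕ) (v l : ℕ))).card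
      ≤ ∑ m ∈ Finset.range (n+1), min t (2 * (n - m)) :=
        Finset.sum_le_sum fun m _ => hlayer m
    _ = ∑ j ∈ Finset.range (n+1), min t (2 * j) := by
        rw [← Finset.sum_range_reflect (fun j => min t (2 * j)) (n+1)]
        refine Finset.sum_congr rfl fun m hm => ?_
        simp only [Finset.mem_range] at hm
        omega
    _ = ∑ j ∈ Finset.range (k+1), min t (2*j) + ∑ j ∈ Finset.Ico (k+1) (n+1), min t (2*j) := by
        rw [Finset.range_eq_Ico,
          ← Finset.sum_Ico_consecutive _ (Nat.zero_le (k+1)) hkt, ← Finset.range_eq_Ico]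
    _ ≤ k * (k+1) + (n - k) * t := by
        have h1 : ∑ j ∈ Finset.range (k+1), min t (2*j) = k * (k+1) := by
          have hc : ∀ j ∈ Finset.range (k+1), min t (2*j) = 2*j := by
            intro j hj
            simp only [Finset.mem_range] at hj
            have : 2 * j ≤ t := by omega
            omega
          rw [Finset.sum_congr rfl hc, ← Finset.mul_sum, mul_comm,
            Finset.sum_range_id_mul_two, Nat.add_sub_cancel, Nat.mul_comm]
        have h2 : ∑ j ∈ Finset.Ico (k+1) (n+1), min t (2*j) = (n - k) * t := by
          have hc : ∀ j ∈ Finset.Ico (k+1) (n+1), min t (2*j) = t := by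
            intro j hj
            simp only [Finset.mem_Ico] at hj
            have : t ≤ 2 * j := by omega
            omega
          rw [Finset.sum_congr rfl hc, Finset.sum_const, Nat.card_Ico, smul_eq_mul]
          congr 1
          omega
        omega

/-- For integers `n ≥ 1`, `0 ≤ t ≤ n` and permutations `u, v` of `{0,…,n}`,
`∑_{l=0}^{t-1} max (u l) (v l) ≤ nt − (t²−t)/2 + ⌊t²/4⌋`. -/
theorem stmt_2 (n t : ℕ) (hn : 1 ≤ n) (htn : t ≤ n)
    (u v : Equiv.Perm (Fin (n + 1))) :
    ((∑ l ∈ Finset.univ.filter (fun l : Fin (n + 1) => (l : ℕ) < t),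
        max ((u l : ℕ)) ((v l : ℕ)) : ℕ) : ℚ)
      ≤ (n : ℚ) * t - ((t : ℚ) ^ 2 - t) / 2 + ((t ^ 2 / 4 : ℕ) : ℚ) := by
  have key := aux_sum_max n t htn u v
  have hcast : ((∑ l ∈ Finset.univ.filter (fun l : Fin (n + 1) => (l : ℕ) < t),
      max ((u l : ℕ)) ((v l : ℕ)) : ℕ) : ℚ)
      ≤ ((t / 2 * (t / 2 + 1) + (n - t / 2) * t : ℕ) : ℚ) := Nat.cast_le.mpr key
  refine hcast.trans ?_
  obtain ⟨m, hm | hm⟩ := Nat.even_or_odd' t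
  · subst hm
    have hd : 2 * m / 2 = m := by omega
    have h4 : (2*m)^2 / 4 = m*m := by
      have h : (2*m)^2 = 4*(m*m) := by ring
      rw [h]
      generalize m*m = q
      omega
    have hmn : m ≤ n := by omega
    rw [hd, h4]
    push_cast [hmn]
    exact le_of_eq (by ring)
  · subst hm
    have hd : (2 * m + 1) / 2 = m := by omega
    have h4 : (2*m+1)^2 / 4 = m*m + m := by
      have h : (2*m+1)^2 = 4*(m*m+m) + 1 := by ring
      rw [h]
      generalize m*m + m = q
      omega
    have hmn : m ≤ n := by omega
    rw [hd, h4]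
    push_cast [hmn]
    exact le_of_eq (by ring)
end
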